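/- Let p be a prime with p > 5 and let (M₁, M₂, M₃) be a triple of maximal subgroups of PSL(2,p) in general position such that M₁ is isomorphic to the symmetric group S₄ (Equiv.Perm (Fin 4)). Then the intersection M₁ ⊓ M₂ ⊓ M₃ contains no element of order 4. -/

import Mathlib

section Defs

variable {G : Type*} [Group G]

/-- `g` is a generating sequence of `G`: the set of its entries generates `G`. -/
def IsGenSeq {n : ℕ} (g : Fin n → G) : Prop :=
  Subgroup.closure (Set.range g) = ⊤

/-- `g` is irredundant: for each `i`, the entries other than `g i` do not generate `G`. -/
def IsIrred {n : ℕ} (g : Fin n → G) : Prop :=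
  ∀ i : Fin n, Subgroup.closure (g '' {j | j ≠ i}) ≠ ⊤

/-- `m(G)`: the largest length of an irredundant generating sequence of `G`. -/
noncomputable def maxIrredLen (G : Type*) [Group G] : ℕ :=
  sSup {n | ∃ g : Fin n → G, IsGenSeq g ∧ IsIrred g}

/-- `G` satisfies the replacement property. -/
def ReplacementProperty (G : Type*) [Group G] : Prop :=
  ∀ g : Fin (maxIrredLen G) → G, IsGenSeq g → IsIrred g →
    ∀ x : G, x ≠ 1 → ∃ i, IsGenSeq (Function.update g i x)

/-- `x` is a witness to failure of the replacement property for `G`. -/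
def IsWitnessToFailure {G : Type*} [Group G] (x : G) : Prop :=
  x ≠ 1 ∧ ∃ g : Fin (maxIrredLen G) → G, IsGenSeq g ∧ IsIrred g ∧
    ∀ i, ¬ IsGenSeq (Function.update g i x)

/-- A family of subgroups is in general position. -/
def InGeneralPosition {n : ℕ} (H : Fin n → Subgroup G) : Prop :=
  ∀ j, ¬ ((⨅ i ∈ ({j}ᶜ : Set (Fin n)), H i) ≤ H j)

/-- The sequence of subgroups `M` corresponds to the sequence of elements `g`. -/
def Corresponds {n : ℕ} (M : Fin n → Subgroup G) (g : Fin n → G) : Prop :=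
  (∀ i j, j ≠ i → g i ∈ M j) ∧ ∀ i, g i ∉ M i

end Defs

/-- `PSL(2,p)`. -/
abbrev PSL (p : ℕ) : Type := Matrix.ProjectiveSpecialLinearGroup (Fin 2) (ZMod p)


open Equiv Subgroup

set_option maxRecDepth 40000

private lemma conj_mem_of_index_two' {G : Type*} [Group G] {H : Subgroup G} (h : H.index = 2)
    {g l : G} (hl : l ∈ H) : g * l * g⁻¹ ∈ H := by
  rw [Subgroup.mul_mem_iff_of_index_two h, Subgroup.mul_mem_iff_of_index_two h,
    Subgroup.inv_mem_iff]
  tauto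

private lemma s4_classify (x : Perm (Fin 4)) (hx : orderOf x = 4)
    (H : Subgroup (Perm (Fin 4))) (hxH : x ∈ H) :
    H = Subgroup.zpowers x ∨ H = (Subgroup.normalizer (Subgroup.zpowers x : Set (Perm (Fin 4)))) ∨ H = ⊤ := by
  have hG : Nat.card (Perm (Fin 4)) = 24 := by
    simp only [Nat.card_eq_fintype_card, Fintype.card_perm, Fintype.card_fin]
    decide
  have hx4 : x ^ 4 = 1 := by have := pow_orderOf_eq_one x; rwa [hx] at this
  have hx2 : x ^ 2 ≠ 1 := fun h => by
    have := orderOf_dvd_of_pow_eq_one h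
    rw [hx] at this
    omega
  have hcard4 : Nat.card (Subgroup.zpowers x) = 4 := by rw [Nat.card_zpowers, hx]
  have hle : Subgroup.zpowers x ≤ H := Subgroup.zpowers_le.mpr hxH
  have hdvd : (4:ℕ) ∣ Nat.card H := by
    have := Subgroup.orderOf_dvd_natCard H hxH; rwa [hx] at this
  have hdvd24 : Nat.card H ∣ 24 := hG ▸ Subgroup.card_subgroup_dvd_card H
  -- zpowers x is not normal
  have hNne : (Subgroup.normalizer (Subgroup.zpowers x : Set (Perm (Fin 4)))) ≠ ⊤ := by
    intro htop
    obtain ⟨g, hg1, hg2⟩ := (by decide : ∀ y : Perm (Fin 4), y^4 = 1 → y^2 ≠ 1 →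
        ∃ g, g*y*g⁻¹ ≠ y ∧ g*y*g⁻¹ ≠ y⁻¹) x hx4 hx2
    have hnorm : (Subgroup.zpowers x).Normal := Subgroup.normalizer_eq_top_iff.mp htop
    have hy : g * x * g⁻¹ ∈ Subgroup.zpowers x :=
      hnorm.conj_mem x (Subgroup.mem_zpowers x) g
    obtain ⟨k, hk⟩ := Subgroup.mem_zpowers_iff.mp hy
    have hconj : orderOf (g * x * g⁻¹) = 4 := by
      have : orderOf x = orderOf (g * x * g⁻¹) :=
        SemiconjBy.orderOf_eq g (show g * x = g * x * g⁻¹ * g by group)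
      rw [← this, hx]
    have hk' : x ^ (k % 4) = g * x * g⁻¹ := by
      rw [← hk, show ((4:ℤ)) = (orderOf x : ℤ) by rw [hx]; norm_num, zpow_mod_orderOf]
    have hr : k % 4 = 0 ∨ k % 4 = 1 ∨ k % 4 = 2 ∨ k % 4 = 3 := by omega
    rcases hr with hr | hr | hr | hr <;> rw [hr] at hk'
    · rw [← hk', zpow_zero, orderOf_one] at hconj; omega
    · exact hg1 (by simpa using hk'.symm)
    · rw [← hk'] at hconj
      have h2 : x ^ ((2:ℕ):ℤ) = x ^ (2:ℕ) := zpow_natCast x 2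
      rw [show ((2:ℤ)) = ((2:ℕ):ℤ) by norm_num, h2] at hconj
      have : orderOf (x ^ (2:ℕ)) ∣ 2 := orderOf_dvd_of_pow_eq_one (by
        rw [← pow_mul]; exact hx4)
      rw [hconj] at this; omega
    · have h3 : x ^ (3:ℤ) = x⁻¹ := by
        have h4 : x ^ (4:ℤ) = 1 := by
          rw [show ((4:ℤ)) = ((4:ℕ):ℤ) by norm_num, zpow_natCast, hx4]
        calc x ^ (3:ℤ) = x ^ (4:ℤ) * x⁻¹ := by rw [← zpow_sub_one]; norm_num
          _ = x⁻¹ := by rw [h4, one_mul]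
      exact hg2 (by rw [← hk', h3])
  -- possible cardinalities
  have hDiv : Nat.card H = 4 ∨ Nat.card H = 8 ∨ Nat.card H = 12 ∨ Nat.card H = 24 := by
    have h1 : Nat.card H ≤ 24 := Nat.le_of_dvd (by norm_num) hdvd24
    set n := Nat.card H with hn
    interval_cases n <;> omega
  rcases hDiv with hc | hc | hc | hc
  · -- card 4 : H = zpowers x
    left
    exact (Subgroup.eq_of_le_of_card_ge hle (by omega)).symm
  · -- card 8 : H = normalizer
    right; left
    have hidx2 : ((Subgroup.zpowers x).subgroupOf H).index = 2 := by
      have hcL : Nat.card ((Subgroup.zpowers x).subgroupOf H) = 4 := by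
        rw [Nat.card_congr (Subgroup.subgroupOfEquivOfLe hle).toEquiv, hcard4]
      have := Subgroup.card_mul_index ((Subgroup.zpowers x).subgroupOf H)
      rw [hcL, hc] at this
      omega
    have hHN : H ≤ (Subgroup.normalizer (Subgroup.zpowers x : Set (Perm (Fin 4)))) := by
      intro h hh
      rw [Subgroup.mem_normalizer_iff]
      intro g
      constructor
      · intro hg
        have hgH : g ∈ H := hle hg
        have := conj_mem_of_index_two' hidx2 (g := (⟨h, hh⟩ : H)) (l := ⟨g, hgH⟩)
          (Subgroup.mem_subgroupOf.mpr hg)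
        exact Subgroup.mem_subgroupOf.mp this
      · intro hg
        have hwH : h * g * h⁻¹ ∈ H := hle hg
        have hgH : g ∈ H := by
          have hgeq : g = h⁻¹ * (h * g * h⁻¹) * h := by group
          rw [hgeq]
          exact mul_mem (mul_mem (inv_mem hh) hwH) hh
        have := conj_mem_of_index_two' hidx2 (g := (⟨h, hh⟩ : H)⁻¹)
          (l := ⟨h * g * h⁻¹, hwH⟩) (Subgroup.mem_subgroupOf.mpr hg)
        have h2 := Subgroup.mem_subgroupOf.mp this
        have : ((⟨h, hh⟩ : H)⁻¹ * ⟨h * g * h⁻¹, hwH⟩ * (⟨h, hh⟩ : H)⁻¹⁻¹ : H) =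
            (h⁻¹ * (h * g * h⁻¹) * h : Perm (Fin 4)) := by
          simp [mul_assoc]
        rw [this] at h2
        have hgeq : h⁻¹ * (h * g * h⁻¹) * h = g := by group
        rwa [hgeq] at h2
    have hcN : Nat.card ((Subgroup.normalizer (Subgroup.zpowers x : Set (Perm (Fin 4))))) = 8 := by
      have hd1 : (8:ℕ) ∣ Nat.card ((Subgroup.normalizer (Subgroup.zpowers x : Set (Perm (Fin 4))))) := by
        have := Subgroup.card_dvd_of_le hHN; rwa [hc] at this
      have hd2 : Nat.card ((Subgroup.normalizer (Subgroup.zpowers x : Set (Perm (Fin 4))))) ∣ 24 :=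
        hG ▸ Subgroup.card_subgroup_dvd_card _
      have hne : Nat.card ((Subgroup.normalizer (Subgroup.zpowers x : Set (Perm (Fin 4))))) ≠ 24 := by
        intro h24
        exact hNne (Subgroup.eq_top_of_card_eq _ (by rw [h24, hG]))
      have h1 : Nat.card ((Subgroup.normalizer (Subgroup.zpowers x : Set (Perm (Fin 4))))) ≤ 24 :=
        Nat.le_of_dvd (by norm_num) hd2
      set m := Nat.card ((Subgroup.normalizer (Subgroup.zpowers x : Set (Perm (Fin 4))))) with hm
      interval_cases m <;> omega
    exact Subgroup.eq_of_le_of_card_ge hHN (by omega)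
  · -- card 12 : impossible
    exfalso
    have hidx : H.index = 2 := by
      have := Subgroup.card_mul_index H
      rw [hc, hG] at this
      omega
    have hA : alternatingGroup (Fin 4) ≤ H := by
      rw [← Equiv.Perm.closure_three_cycles_eq_alternating]
      refine (Subgroup.closure_le H).mpr fun σ hσ => ?_
      have h3 : σ ^ 3 = 1 := by
        have := pow_orderOf_eq_one σ
        rwa [Equiv.Perm.IsThreeCycle.orderOf hσ] at this
      have hσeq : σ = (σ ^ 2) ^ 2 := by
        rw [← pow_mul]
        have : σ ^ 4 = σ ^ 3 * σ := by rw [pow_succ]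
        rw [show (2*2 : ℕ) = 4 by norm_num, this, h3, one_mul]
      rw [hσeq]
      exact Subgroup.sq_mem_of_index_two hidx (σ ^ 2)
    have hcA : Nat.card (alternatingGroup (Fin 4)) = 12 := by
      have h2 : 2 * Fintype.card (alternatingGroup (Fin 4)) = 24 := by
        rw [two_mul_card_alternatingGroup]
        simp only [Fintype.card_perm, Fintype.card_fin]
        decide
      simp only [Nat.card_eq_fintype_card]
      omega
    have hHA : alternatingGroup (Fin 4) = H :=
      Subgroup.eq_of_le_of_card_ge hA (by omega)
    have hxA : x ∈ alternatingGroup (Fin 4) := hHA ▸ hxH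
    exact hx2 ((by decide : ∀ g : Perm (Fin 4), Perm.sign g = 1 → g^4 = 1 → g^2 = 1) x
      (Equiv.Perm.mem_alternatingGroup.mp hxA) hx4)
  · -- card 24 : H = ⊤
    right; right
    exact Subgroup.eq_top_of_card_eq _ (by rw [hc, hG])

private lemma s4_chain (x : Perm (Fin 4)) (hx : orderOf x = 4)
    (H K : Subgroup (Perm (Fin 4))) (hxH : x ∈ H) (hxK : x ∈ K) :
    H ≤ K ∨ K ≤ H := by
  rcases s4_classify x hx H hxH with h | h | h
  · exact Or.inl (h ▸ Subgroup.zpowers_le.mpr hxK)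
  · rcases s4_classify x hx K hxK with k | k | k
    · refine Or.inr ?_
      rw [h, k]
      exact Subgroup.le_normalizer
    · exact Or.inl (h ▸ k ▸ le_refl _)
    · exact Or.inl (k ▸ le_top)
  · exact Or.inr (h ▸ le_top)

theorem psl_S4_triple_no_order_four (p : ℕ) [Fact p.Prime] (hp : 5 < p)
    (M : Fin 3 → Subgroup (PSL p)) (hmax : ∀ i, IsCoatom (M i))
    (hgp : InGeneralPosition M)
    (hS4 : Nonempty (M 0 ≃* Equiv.Perm (Fin 4))) :
    ∀ x ∈ M 0 ⊓ M 1 ⊓ M 2, orderOf x ≠ 4 := by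
  obtain ⟨e⟩ := hS4
  intro x hx hord
  have hx0 : x ∈ M 0 := hx.1.1
  have hx1 : x ∈ M 1 := hx.1.2
  have hx2 : x ∈ M 2 := hx.2
  have hgp1 : ¬ (M 0 ⊓ M 2 ≤ M 1) := by
    have h := hgp 1
    have hset : ({1}ᶜ : Set (Fin 3)) = {0, 2} := by
      ext i; fin_cases i <;> simp
    rwa [hset, iInf_pair] at h
  have hgp2 : ¬ (M 0 ⊓ M 1 ≤ M 2) := by
    have h := hgp 2
    have hset : ({2}ᶜ : Set (Fin 3)) = {0, 1} := by
      ext i; fin_cases i <;> simp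
    rwa [hset, iInf_pair] at h
  set z : M 0 := ⟨x, hx0⟩ with hz
  have hzord : orderOf (e z) = 4 := by
    rw [MulEquiv.orderOf_eq]
    rw [← Subgroup.orderOf_coe]
    exact hord
  set F : Subgroup (PSL p) → Subgroup (Equiv.Perm (Fin 4)) :=
    fun B => (B.subgroupOf (M 0)).map e.toMonoidHom with hF
  have hmem : ∀ (B : Subgroup (PSL p)), x ∈ B → e z ∈ F B := fun B hB =>
    Subgroup.mem_map.mpr ⟨z, Subgroup.mem_subgroupOf.mpr hB, rfl⟩
  have hrefl : ∀ B C : Subgroup (PSL p), B ≤ M 0 → F B ≤ F C → B ≤ C := by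
    intro B C hBM hFBC b hb
    have hmem1 : (⟨b, hBM hb⟩ : M 0) ∈ B.subgroupOf (M 0) := Subgroup.mem_subgroupOf.mpr hb
    have h2 : e ⟨b, hBM hb⟩ ∈ F C := hFBC (Subgroup.mem_map.mpr ⟨_, hmem1, rfl⟩)
    obtain ⟨c, hc, hce⟩ := Subgroup.mem_map.mp h2
    have hcb : c = ⟨b, hBM hb⟩ := e.injective hce
    exact Subgroup.mem_subgroupOf.mp (hcb ▸ hc)
  rcases s4_chain (e z) hzord (F (M 0 ⊓ M 2)) (F (M 0 ⊓ M 1))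
      (hmem _ (Subgroup.mem_inf.mpr ⟨hx0, hx2⟩)) (hmem _ (Subgroup.mem_inf.mpr ⟨hx0, hx1⟩))
    with hcase | hcase
  · exact hgp1 (le_trans (hrefl _ _ inf_le_left hcase) inf_le_right)
  · exact hgp2 (le_trans (hrefl _ _ inf_le_left hcase) inf_le_right)
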